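/- Let L be a jump operator on ℤ with symmetric kernel k (k(−j) = k(j) ≥ 0, k(0) = 0, Σ k(j) < ∞) such that Σ_{j∈ℕ} k(j)^{1−δ} < ∞ for some δ ∈ (0,1). Then there is c > 0 such that Ψ_{2,Υ}(f)(x) ≥ c|Lf(x)|^γ for all bounded f : ℤ → ℝ and x ∈ ℤ, with γ = (1+δ)/δ. -/

import Mathlib

noncomputable def Ups (z : ℝ) : ℝ := Real.exp z - 1 - z

lemma ups_nonneg (z : ℝ) : 0 ≤ Ups z := by
  have := Real.add_one_le_exp z; unfold Ups; linarith

lemma key_scalar (s : ℝ) : Ups (|s|/2) ≤ Real.exp (s/2) * Ups (-s) := by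
  have hX : (0:ℝ) < Real.exp (s/2) := Real.exp_pos _
  have hY : (0:ℝ) < Real.exp (-s/2) := Real.exp_pos _
  have hXY : Real.exp (s/2) * Real.exp (-s/2) = 1 := by
    have h : s/2 + -s/2 = 0 := by ring
    rw [← Real.exp_add, h, Real.exp_zero]
  have hYY : Real.exp (-s/2) * Real.exp (-s/2) = Real.exp (-s) := by
    have h : -s/2 + -s/2 = -s := by ring
    rw [← Real.exp_add, h]
  have h1 : 1 + s/2 ≤ Real.exp (s/2) := by linarith [Real.add_one_le_exp (s/2)]
  have h2 : 1 + -s/2 ≤ Real.exp (-s/2) := by linarith [Real.add_one_le_exp (-s/2)]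
  rcases le_total 0 s with hs | hs
  · rw [abs_of_nonneg hs]
    unfold Ups
    nlinarith [mul_le_mul_of_nonneg_right h2 hX.le]
  · rw [abs_of_nonpos hs]
    unfold Ups
    nlinarith [mul_le_mul_of_nonneg_right h1 hY.le, sq_nonneg (s/2), mul_pos hX hY]

lemma taylor_ups {n : ℕ} (hn : 2 ≤ n) {t : ℝ} (ht : 0 ≤ t) :
    t ^ n / n.factorial ≤ Ups t := by
  have h := Real.sum_le_exp_of_nonneg ht (n+1)
  have hsub : ({0, 1, n} : Finset ℕ) ⊆ Finset.range (n+1) := by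
    intro i hi
    simp only [Finset.mem_insert, Finset.mem_singleton] at hi
    rcases hi with h|h|h <;> simp [h] <;> omega
  have hle : ∑ i ∈ ({0, 1, n} : Finset ℕ), t ^ i / i.factorial
      ≤ ∑ i ∈ Finset.range (n+1), t ^ i / i.factorial := by
    apply Finset.sum_le_sum_of_subset_of_nonneg hsub
    intro i _ _
    positivity
  have hs : ∑ i ∈ ({0, 1, n} : Finset ℕ), t ^ i / i.factorial
      = 1 + t + t ^ n / n.factorial := by
    have h0 : (0:ℕ) ∉ ({1, n} : Finset ℕ) := by simp; omega
    have h1 : (1:ℕ) ∉ ({n} : Finset ℕ) := by simp; omega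
    rw [Finset.sum_insert h0, Finset.sum_insert h1, Finset.sum_singleton]
    simp [Nat.factorial]
    ring
  unfold Ups
  rw [hs] at hle
  linarith

lemma ups_rpow {γ : ℝ} (hγ : 2 ≤ γ) {n : ℕ} (hγn : γ ≤ n) {t : ℝ} (ht : 0 ≤ t) :
    t ^ γ ≤ n.factorial * Ups t := by
  have hn2 : 2 ≤ n := by exact_mod_cast le_trans hγ hγn
  have hfac2 : (2:ℝ) ≤ n.factorial := by
    exact_mod_cast le_trans hn2 (Nat.self_le_factorial n)
  rcases eq_or_lt_of_le ht with h0 | h0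
  · rw [← h0]
    rw [Real.zero_rpow (by linarith)]
    have := ups_nonneg 0
    positivity
  rcases le_total t 1 with ht1 | ht1
  · have h1 : t ^ γ ≤ t ^ (2:ℝ) := Real.rpow_le_rpow_of_exponent_ge h0 ht1 hγ
    have h2 : t ^ (2:ℝ) = t ^ (2:ℕ) := Real.rpow_natCast t 2 ▸ by norm_num
    have h3 : t ^ (2:ℕ) / (2:ℕ).factorial ≤ Ups t := taylor_ups le_rfl ht
    have h4 : ((2:ℕ).factorial : ℝ) = 2 := by norm_num [Nat.factorial]
    have h5 : t ^ (2:ℕ) ≤ 2 * Ups t := by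
      rw [h4] at h3; linarith [h3, div_le_iff₀ (show (0:ℝ) < 2 by norm_num) |>.mp h3]
    calc t ^ γ ≤ t ^ (2:ℝ) := h1
      _ = t ^ (2:ℕ) := h2
      _ ≤ 2 * Ups t := h5
      _ ≤ n.factorial * Ups t := mul_le_mul_of_nonneg_right hfac2 (ups_nonneg t)
  · have h1 : t ^ γ ≤ t ^ (n:ℝ) := Real.rpow_le_rpow_of_exponent_le ht1 hγn
    have h2 : t ^ (n:ℝ) = t ^ n := Real.rpow_natCast t n
    have h3 : t ^ n / n.factorial ≤ Ups t := taylor_ups hn2 ht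
    have hf : (0:ℝ) < n.factorial := by positivity
    rw [div_le_iff₀ hf] at h3
    calc t ^ γ ≤ t ^ n := h1.trans_eq h2
      _ ≤ n.factorial * Ups t := by linarith

lemma amgm_exp (u v : ℝ) : 2 * Real.exp ((u+v)/2) ≤ Real.exp u + Real.exp v := by
  have h1 : Real.exp (u/2) * Real.exp (u/2) = Real.exp u := by
    have h : u/2 + u/2 = u := by ring
    rw [← Real.exp_add, h]
  have h2 : Real.exp (v/2) * Real.exp (v/2) = Real.exp v := by
    have h : v/2 + v/2 = v := by ring
    rw [← Real.exp_add, h]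
  have h3 : Real.exp (u/2) * Real.exp (v/2) = Real.exp ((u+v)/2) := by
    have h : u/2 + v/2 = (u+v)/2 := by ring
    rw [← Real.exp_add, h]
  nlinarith [sq_nonneg (Real.exp (u/2) - Real.exp (v/2))]

/-- For a symmetric summable jump kernel `k` on `ℤ` with `Σ_{j∈ℕ} k(j)^{1-δ} < ∞` for some
`δ ∈ (0,1)`, there is `c > 0` such that `Ψ_{2,Υ}(f)(x) ≥ c |Lf(x)|^γ` with `γ = (1+δ)/δ`
for all bounded `f : ℤ → ℝ` and all `x ∈ ℤ`. -/
theorem psi2_lower_bound (k : ℤ → ℝ) (δ : ℝ) (hδ : δ ∈ Set.Ioo (0 : ℝ) 1)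
    (hknn : ∀ j : ℤ, 0 ≤ k j) (hk0 : k 0 = 0) (hsymm : ∀ j : ℤ, k (-j) = k j)
    (hsum : Summable k) (hkpos : 0 < ∑' j : ℤ, k j)
    (hδsum : Summable (fun n : ℕ => k (n : ℤ) ^ (1 - δ))) :
    ∃ c > (0 : ℝ), ∀ f : ℤ → ℝ, (∃ M : ℝ, ∀ x : ℤ, |f x| ≤ M) → ∀ x : ℤ,
      c * |∑' j : ℤ, k j * (f (x + j) - f x)| ^ ((1 + δ) / δ)
        ≤ (1 / 2) * ∑' j : ℤ, ∑' l : ℤ, k j * k l * Real.exp (f (x + l) - f x)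
            * Ups (f (x + j + l) - f (x + j) - f (x + l) + f x) := by
  obtain ⟨hδ0, hδ1⟩ := hδ
  have hδne : δ ≠ 0 := ne_of_gt hδ0
  have h1δ0 : (0:ℝ) < 1 + δ := by linarith
  have h1δne : (1:ℝ) + δ ≠ 0 := ne_of_gt h1δ0
  set γ : ℝ := (1 + δ) / δ with hγdef
  have hγ2 : (2:ℝ) < γ := by
    rw [hγdef, lt_div_iff₀ hδ0]; linarith
  have hγ1 : (1:ℝ) < γ := by linarith
  have hγ0 : (0:ℝ) < γ := by linarith
  have hγn : γ ≤ (⌈γ⌉₊ : ℝ) := Nat.le_ceil γ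
  set n : ℕ := ⌈γ⌉₊ with hndef
  have hSsum : Summable (fun j : ℤ => k j ^ (1 - δ)) := by
    apply Summable.of_nat_of_neg (f := fun j : ℤ => k j ^ (1 - δ)) hδsum
    simpa only [hsymm] using hδsum
  set S : ℝ := ∑' j : ℤ, k j ^ (1 - δ) with hSdef
  obtain ⟨j₀, hj₀⟩ : ∃ j, 0 < k j := by
    by_contra h
    push_neg at h
    have hz : ∀ j, k j = 0 := fun j => le_antisymm (h j) (hknn j)
    have hzz : ∑' j : ℤ, k j = 0 := by simp [hz]
    rw [hzz] at hkpos; exact lt_irrefl 0 hkpos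
  have hS0 : 0 < S := by
    refine Summable.tsum_pos hSsum (fun j => Real.rpow_nonneg (hknn j) _) j₀ ?_
    exact Real.rpow_pos_of_pos hj₀ _
  have hSγ0 : 0 < S ^ (γ - 1) := Real.rpow_pos_of_pos hS0 _
  set c₂ : ℝ := ((2:ℝ) ^ n * n.factorial)⁻¹ with hc₂def
  have hfacpos : (0:ℝ) < n.factorial := by positivity
  have hc₂0 : 0 < c₂ := by positivity
  refine ⟨c₂ / (2 * S ^ (γ - 1)), by positivity, ?_⟩
  rintro f ⟨M, hM⟩ x
  have hM0 : 0 ≤ M := (abs_nonneg _).trans (hM 0)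
  set A : ℝ := ∑' j : ℤ, k j * (f (x + j) - f x) with hAdef
  set T : ℤ → ℤ → ℝ := fun j l => k j * k l * Real.exp (f (x + l) - f x)
      * Ups (f (x + j + l) - f (x + j) - f (x + l) + f x) with hTdef
  set s : ℤ → ℝ := fun j => (f (x + j) - f x) + (f (x + -j) - f x) with hsdef
  set P : ℤ → ℝ := fun j => k j ^ (2:ℝ) * |s j| ^ γ with hPdef
  set K : ℝ := ∑' j : ℤ, k j with hKdef
  have hK0 : 0 ≤ K := hkpos.le
  have hkK : ∀ j, k j ≤ K := fun j => Summable.le_tsum hsum j fun i _ => hknn i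
  have hsM : ∀ j, |s j| ≤ 4*M := by
    intro j
    rw [abs_le]
    have h1 := abs_le.mp (hM (x+j)); have h2 := abs_le.mp (hM (x + -j))
    have h3 := abs_le.mp (hM x)
    constructor <;> simp only [hsdef] <;> linarith [h1.1, h1.2, h2.1, h2.2, h3.1, h3.2]
  have hTnn : ∀ j l, 0 ≤ T j l := by
    intro j l
    have h1 := ups_nonneg (f (x + j + l) - f (x + j) - f (x + l) + f x)
    have h2 := (Real.exp_pos (f (x + l) - f x)).le
    have h3 := hknn j; have h4 := hknn l
    simp only [hTdef]
    positivity
  set CE : ℝ := Real.exp (2*M) * (Real.exp (4*M) + 4*M) with hCEdef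
  have hTle : ∀ j l, T j l ≤ CE * k j * k l := by
    intro j l
    have e1 := abs_le.mp (hM (x+j+l)); have e2 := abs_le.mp (hM (x+j))
    have e3 := abs_le.mp (hM (x+l)); have e4 := abs_le.mp (hM x)
    have h1 : Real.exp (f (x + l) - f x) ≤ Real.exp (2*M) := by
      apply Real.exp_le_exp.mpr; linarith [e3.1, e3.2, e4.1, e4.2]
    have h2 : Ups (f (x + j + l) - f (x + j) - f (x + l) + f x) ≤ Real.exp (4*M) + 4*M := by
      unfold Ups
      have h5 : Real.exp (f (x + j + l) - f (x + j) - f (x + l) + f x) ≤ Real.exp (4*M) := by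
        apply Real.exp_le_exp.mpr; linarith [e1.1, e1.2, e2.1, e2.2, e3.1, e3.2, e4.1, e4.2]
      have h6 : -(4*M) ≤ f (x + j + l) - f (x + j) - f (x + l) + f x := by
        linarith [e1.1, e1.2, e2.1, e2.2, e3.1, e3.2, e4.1, e4.2]
      linarith
    calc T j l = (k j * k l) * (Real.exp (f (x + l) - f x)
          * Ups (f (x + j + l) - f (x + j) - f (x + l) + f x)) := by simp only [hTdef]; ring
      _ ≤ (k j * k l) * CE := by
          apply mul_le_mul_of_nonneg_left _ (mul_nonneg (hknn j) (hknn l))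
          rw [hCEdef]
          exact mul_le_mul h1 h2 (ups_nonneg _) (Real.exp_pos _).le
      _ = CE * k j * k l := by ring
  have hTsum : ∀ j, Summable (T j) := by
    intro j
    exact Summable.of_nonneg_of_le (hTnn j) (hTle j) (hsum.mul_left _)
  set F : ℤ → ℝ := fun j => ∑' l, T j l with hFdef
  have hFnn : ∀ j, 0 ≤ F j := fun j => tsum_nonneg (hTnn j)
  have hFle : ∀ j, F j ≤ CE * K * k j := by
    intro j
    calc F j ≤ ∑' l, CE * k j * k l := Summable.tsum_le_tsum (hTle j) (hTsum j) (hsum.mul_left _)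
      _ = CE * k j * K := by rw [tsum_mul_left]
      _ = CE * K * k j := by ring
  have hFsum : Summable F := Summable.of_nonneg_of_le hFnn hFle (hsum.mul_left _)
  set G : ℤ → ℝ := fun j => T j (-j) with hGdef
  have hGnn : ∀ j, 0 ≤ G j := fun j => hTnn j (-j)
  have hGleF : ∀ j, G j ≤ F j := fun j => Summable.le_tsum (hTsum j) (-j) (fun l _ => hTnn j l)
  have hGsum : Summable G := Summable.of_nonneg_of_le hGnn hGleF hFsum
  have hGF : ∑' j, G j ≤ ∑' j, F j := Summable.tsum_le_tsum hGleF hGsum hFsum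
  have hGnegsum : Summable (fun j : ℤ => G (-j)) := by
    have h := (Equiv.neg ℤ).summable_iff (f := G)
    simpa only [Function.comp_def, Equiv.neg_apply] using h.mpr hGsum
  have hGnegtsum : ∑' j : ℤ, G (-j) = ∑' j, G j := by
    have h := (Equiv.neg ℤ).tsum_eq G
    simpa only [Equiv.neg_apply] using h
  have hGexp : ∀ j, G j = (k j * k j) * (Real.exp (f (x + -j) - f x) * Ups (- s j)) := by
    intro j
    have harg : f (x + j + -j) - f (x + j) - f (x + -j) + f x = - s j := by
      rw [show x + j + -j = x by ring]
      simp only [hsdef]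
      ring
    simp only [hGdef, hTdef, harg, hsymm]
    ring
  have hGexpneg : ∀ j, G (-j) = (k j * k j) * (Real.exp (f (x + j) - f x) * Ups (- s j)) := by
    intro j
    have harg : f (x + -j + - -j) - f (x + -j) - f (x + - -j) + f x = - s j := by
      rw [show x + -j + - -j = x by ring, show (- -j) = j by ring]
      simp only [hsdef]
      ring
    simp only [hGdef, hTdef, harg, hsymm, neg_neg]
    simp only [hsdef, ← sub_eq_add_neg]
    ring
  have hkey : ∀ j, c₂ * P j ≤ (G j + G (-j)) / 2 := by
    intro j
    have hamgm := amgm_exp (f (x + -j) - f x) (f (x + j) - f x)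
    have hhalf : ((f (x + -j) - f x) + (f (x + j) - f x))/2 = s j / 2 := by
      simp only [hsdef]; ring
    have h1 : Real.exp (s j / 2) * Ups (- s j)
        ≤ (Real.exp (f (x + -j) - f x) + Real.exp (f (x + j) - f x))/2 * Ups (- s j) := by
      apply mul_le_mul_of_nonneg_right _ (ups_nonneg _)
      rw [← hhalf]
      linarith [hamgm]
    have h2 : Ups (|s j| / 2) ≤ Real.exp (s j / 2) * Ups (- s j) := key_scalar (s j)
    have h3 : (|s j| / 2) ^ γ ≤ n.factorial * Ups (|s j| / 2) :=
      ups_rpow hγ2.le hγn (by positivity)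
    have h4 : |s j| ^ γ / (2:ℝ)^n ≤ (|s j| / 2) ^ γ := by
      have h2γn : (2:ℝ)^γ ≤ (2:ℝ)^n := by
        rw [← Real.rpow_natCast 2 n]
        exact Real.rpow_le_rpow_of_exponent_le one_le_two hγn
      rw [Real.div_rpow (abs_nonneg _) (by norm_num : (0:ℝ) ≤ 2)]
      gcongr
    have hk2 : k j ^ (2:ℝ) = k j * k j := by
      rw [show (2:ℝ) = ((2:ℕ):ℝ) by norm_num, Real.rpow_natCast]
      ring
    have hU : c₂ * |s j| ^ γ ≤ Real.exp (s j / 2) * Ups (- s j) := by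
      have step1 : c₂ * |s j| ^ γ ≤ (|s j|/2)^γ / n.factorial := by
        have e1 : c₂ * |s j|^γ = (|s j|^γ / 2^n) / n.factorial := by
          rw [hc₂def]; field_simp
        rw [e1]
        gcongr
      have step2 : (|s j|/2)^γ / n.factorial ≤ Ups (|s j|/2) := by
        rw [div_le_iff₀ hfacpos]; linarith [h3]
      exact step1.trans (step2.trans h2)
    calc c₂ * P j = (k j * k j) * (c₂ * |s j| ^ γ) := by
          simp only [hPdef, hk2]; ring
      _ ≤ (k j * k j) * (Real.exp (s j / 2) * Ups (- s j)) :=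
          mul_le_mul_of_nonneg_left hU (mul_nonneg (hknn j) (hknn j))
      _ ≤ (k j * k j) * ((Real.exp (f (x + -j) - f x) + Real.exp (f (x + j) - f x))/2 * Ups (- s j)) :=
          mul_le_mul_of_nonneg_left h1 (mul_nonneg (hknn j) (hknn j))
      _ = (G j + G (-j)) / 2 := by rw [hGexp j, hGexpneg j]; ring
  have hPnn : ∀ j, 0 ≤ P j := by
    intro j
    simp only [hPdef]
    have := hknn j
    positivity
  have hPsum : Summable P := by
    apply Summable.of_nonneg_of_le hPnn (fun j => ?_) (hsum.mul_left (K * (4*M+1)^γ))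
    have h1 : k j ^ (2:ℝ) = k j * k j := by
      rw [show (2:ℝ) = ((2:ℕ):ℝ) by norm_num, Real.rpow_natCast]; ring
    have h2 : |s j| ^ γ ≤ (4*M+1) ^ γ :=
      Real.rpow_le_rpow (abs_nonneg _) (by linarith [hsM j]) hγ0.le
    have h3 : (0:ℝ) ≤ (4*M+1) ^ γ := Real.rpow_nonneg (by linarith) _
    calc P j = (k j * k j) * |s j| ^ γ := by simp only [hPdef, h1]
      _ ≤ (K * k j) * (4*M+1) ^ γ := by
          apply mul_le_mul (mul_le_mul_of_nonneg_right (hkK j) (hknn j)) h2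
            (Real.rpow_nonneg (abs_nonneg _) _) (mul_nonneg hK0 (hknn j))
      _ = K * (4*M+1)^γ * k j := by ring
  have hQsum : Summable (fun j : ℤ => (G j + G (-j))/2) := (hGsum.add hGnegsum).div_const 2
  have h7 : c₂ * (∑' j, P j) ≤ ∑' j, G j := by
    have t1 : ∑' j, c₂ * P j ≤ ∑' j : ℤ, (G j + G (-j))/2 :=
      Summable.tsum_le_tsum hkey (hPsum.mul_left c₂) hQsum
    rw [tsum_mul_left] at t1
    have t2 : ∑' j : ℤ, (G j + G (-j))/2 = ∑' j, G j := by
      rw [tsum_div_const, Summable.tsum_add hGsum hGnegsum, hGnegtsum]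
      ring
    linarith [t1, t2.le, t2.ge]
  -- summability for the first-order sums
  have habound : ∀ j : ℤ, |f (x + j) - f x| ≤ 2*M := by
    intro j
    have h1 := abs_le.mp (hM (x+j)); have h2 := abs_le.mp (hM x)
    rw [abs_le]; constructor <;> linarith [h1.1, h1.2, h2.1, h2.2]
  have hAsum : Summable (fun j : ℤ => k j * (f (x + j) - f x)) := by
    apply Summable.of_norm
    apply Summable.of_nonneg_of_le (fun j => norm_nonneg _) (fun j => ?_) (hsum.mul_left (2*M))
    rw [Real.norm_eq_abs, abs_mul, abs_of_nonneg (hknn j)]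
    calc k j * |f (x + j) - f x| ≤ k j * (2*M) :=
          mul_le_mul_of_nonneg_left (habound j) (hknn j)
      _ = 2*M * k j := by ring
  have hAnegsum : Summable (fun j : ℤ => k j * (f (x + -j) - f x)) := by
    apply Summable.of_norm
    apply Summable.of_nonneg_of_le (fun j => norm_nonneg _) (fun j => ?_) (hsum.mul_left (2*M))
    rw [Real.norm_eq_abs, abs_mul, abs_of_nonneg (hknn j)]
    calc k j * |f (x + -j) - f x| ≤ k j * (2*M) :=
          mul_le_mul_of_nonneg_left (habound (-j)) (hknn j)
      _ = 2*M * k j := by ring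
  have hAneg : ∑' j : ℤ, k j * (f (x + j) - f x) = ∑' j : ℤ, k j * (f (x + -j) - f x) := by
    have h := (Equiv.neg ℤ).tsum_eq (fun j : ℤ => k j * (f (x + j) - f x))
    simp only [Equiv.neg_apply] at h
    rw [← h]
    exact tsum_congr fun j => by rw [hsymm]
  have hkssum : Summable (fun j : ℤ => k j * s j) := by
    apply (hAsum.add hAnegsum).congr
    intro j
    simp only [hsdef]
    ring
  have hA2 : 2 * A = ∑' j : ℤ, k j * s j := by
    calc 2 * A = (∑' j : ℤ, k j * (f (x + j) - f x)) + ∑' j : ℤ, k j * (f (x + -j) - f x) := by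
          rw [← hAneg, hAdef]; ring
      _ = ∑' j : ℤ, (k j * (f (x + j) - f x) + k j * (f (x + -j) - f x)) :=
          (Summable.tsum_add hAsum hAnegsum).symm
      _ = ∑' j : ℤ, k j * s j := tsum_congr fun j => by simp only [hsdef]; ring
  have hksabs : Summable (fun j : ℤ => k j * |s j|) := by
    apply Summable.of_nonneg_of_le (fun j => mul_nonneg (hknn j) (abs_nonneg _))
      (fun j => ?_) (hsum.mul_left (4*M))
    calc k j * |s j| ≤ k j * (4*M) := mul_le_mul_of_nonneg_left (hsM j) (hknn j)
      _ = 4*M * k j := by ring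
  have hSig1nn : (0:ℝ) ≤ ∑' j : ℤ, k j * |s j| :=
    tsum_nonneg fun j => mul_nonneg (hknn j) (abs_nonneg _)
  have hA_le : |A| ≤ ∑' j : ℤ, k j * |s j| := by
    have hnorm : ‖∑' j : ℤ, k j * s j‖ ≤ ∑' j : ℤ, ‖k j * s j‖ := by
      apply norm_tsum_le_tsum_norm
      apply hksabs.congr
      intro j
      rw [Real.norm_eq_abs, abs_mul, abs_of_nonneg (hknn j)]
    have heq : ∑' j : ℤ, ‖k j * s j‖ = ∑' j : ℤ, k j * |s j| :=
      tsum_congr fun j => by rw [Real.norm_eq_abs, abs_mul, abs_of_nonneg (hknn j)]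
    rw [Real.norm_eq_abs, ← hA2, heq, abs_mul] at hnorm
    rw [abs_of_nonneg (by norm_num : (0:ℝ) ≤ 2)] at hnorm
    linarith [abs_nonneg A]
  -- Hölder
  set u : ℤ → ℝ := fun j => k j ^ (2*δ/(1+δ)) * |s j| with hudef
  set v : ℤ → ℝ := fun j => k j ^ ((1-δ)/(1+δ)) with hvdef
  have hpq : Real.HolderConjugate γ (1+δ) := by
    rw [Real.holderConjugate_iff]
    constructor
    · exact hγ1
    · rw [hγdef, inv_div]
      field_simp
      ring
  have hu_nn : ∀ j, 0 ≤ u j := fun j =>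
    mul_nonneg (Real.rpow_nonneg (hknn j) _) (abs_nonneg _)
  have hv_nn : ∀ j, 0 ≤ v j := fun j => Real.rpow_nonneg (hknn j) _
  have hup : ∀ j, u j ^ γ = P j := by
    intro j
    have hexp : 2*δ/(1+δ) * γ = 2 := by
      rw [hγdef]; field_simp; try ring
    simp only [hudef, hPdef]
    rw [Real.mul_rpow (Real.rpow_nonneg (hknn j) _) (abs_nonneg _),
      ← Real.rpow_mul (hknn j), hexp]
  have hvp : ∀ j, v j ^ (1+δ) = k j ^ (1-δ) := by
    intro j
    have hexp : (1-δ)/(1+δ) * (1+δ) = 1-δ := by field_simp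
    simp only [hvdef]
    rw [← Real.rpow_mul (hknn j), hexp]
  have huv : ∀ j, u j * v j = k j * |s j| := by
    intro j
    have hsum1 : 2*δ/(1+δ) + (1-δ)/(1+δ) = 1 := by field_simp; ring
    calc u j * v j = k j ^ (2*δ/(1+δ)) * k j ^ ((1-δ)/(1+δ)) * |s j| := by
          simp only [hudef, hvdef]; ring
      _ = k j ^ (2*δ/(1+δ) + (1-δ)/(1+δ)) * |s j| := by
          rw [Real.rpow_add' (hknn j) (by rw [hsum1]; norm_num)]
      _ = k j * |s j| := by rw [hsum1, Real.rpow_one]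
  have hLpsum : Summable (fun j => u j ^ γ) := (summable_congr hup).mpr hPsum
  have hLqsum : Summable (fun j => v j ^ (1+δ)) := (summable_congr hvp).mpr hSsum
  have hHolder := Real.inner_le_Lp_mul_Lq_tsum_of_nonneg hpq hu_nn hv_nn hLpsum hLqsum
  rw [tsum_congr huv, tsum_congr hup, tsum_congr hvp, ← hSdef] at hHolder
  have hPnn' : (0:ℝ) ≤ ∑' j, P j := tsum_nonneg hPnn
  have h5 : (∑' j : ℤ, k j * |s j|) ^ γ ≤ (∑' j, P j) * S ^ (γ-1) := by
    have h5a : ((∑' j, P j) ^ (1/γ) * S ^ (1/(1+δ))) ^ γ = (∑' j, P j) * S ^ (γ-1) := by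
      rw [Real.mul_rpow (Real.rpow_nonneg hPnn' _) (Real.rpow_nonneg hS0.le _),
        ← Real.rpow_mul hPnn', ← Real.rpow_mul hS0.le]
      rw [show 1/γ * γ = 1 by field_simp, show 1/(1+δ) * γ = γ - 1 by rw [hγdef]; field_simp; try ring]
      rw [Real.rpow_one]
    calc (∑' j : ℤ, k j * |s j|) ^ γ
        ≤ ((∑' j, P j) ^ (1/γ) * S ^ (1/(1+δ))) ^ γ :=
          Real.rpow_le_rpow hSig1nn hHolder hγ0.le
      _ = (∑' j, P j) * S ^ (γ-1) := h5a
  -- final assembly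
  have hgoalRHS : ∑' (j : ℤ), ∑' (l : ℤ), (k j * k l * Real.exp (f (x + l) - f x)
      * Ups (f (x + j + l) - f (x + j) - f (x + l) + f x)) = ∑' j, F j := by
    simp only [hFdef, hTdef]
  rw [hgoalRHS]
  have hstep1 : c₂ / (2 * S ^ (γ - 1)) * |A| ^ γ
      ≤ c₂ / (2 * S ^ (γ - 1)) * ((∑' j, P j) * S ^ (γ-1)) := by
    apply mul_le_mul_of_nonneg_left _ (by positivity)
    calc |A| ^ γ ≤ (∑' j : ℤ, k j * |s j|) ^ γ :=
          Real.rpow_le_rpow (abs_nonneg _) hA_le hγ0.le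
      _ ≤ (∑' j, P j) * S ^ (γ-1) := h5
  have hstep2 : c₂ / (2 * S ^ (γ - 1)) * ((∑' j, P j) * S ^ (γ-1)) = (c₂ * ∑' j, P j) / 2 := by
    field_simp
  calc c₂ / (2 * S ^ (γ - 1)) * |A| ^ γ
      ≤ (c₂ * ∑' j, P j) / 2 := by rw [← hstep2]; exact hstep1
    _ ≤ (∑' j, G j) / 2 := by linarith [h7]
    _ ≤ (∑' j, F j) / 2 := by linarith [hGF]
    _ = (1/2) * ∑' j, F j := by ring
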